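/- Let α ∈ (0,1), n ≥ 1, and f(x) = inf_{r∈ℝ} (r + (1/(nα)) Σᵢ (xᵢ - r)⁺). Then for all x, y ∈ ℝⁿ: -(1/(nα)) Σᵢ (yᵢ - xᵢ)⁺ ≤ f(x) - f(y) ≤ (1/(nα)) Σᵢ (xᵢ - yᵢ)⁺. -/
import Mathlib


/-- Empirical CVaR functional at level `α` for a sample `x : Fin n → ℝ`. -/
noncomputable def ecvar (n : ℕ) (α : ℝ) (x : Fin n → ℝ) : ℝ :=
  ⨅ r : ℝ, (r + (1 / (n * α)) * ∑ i, max (x i - r) 0)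

lemma ecvar_bdd (α : ℝ) (hα : α ∈ Set.Ioo (0 : ℝ) 1) (n : ℕ) (hn : 1 ≤ n) (z : Fin n → ℝ) :
    BddBelow (Set.range fun r : ℝ => r + (1 / (n * α)) * ∑ i, max (z i - r) 0) := by
  obtain ⟨hα0, hα1⟩ := hα
  have hn0 : (0:ℝ) < n := by exact_mod_cast hn
  refine ⟨min 0 ((1 / (n * α)) * ∑ i, z i), ?_⟩
  rintro _ ⟨r, rfl⟩
  rcases le_or_gt 0 r with h | h
  · have h2 : (0:ℝ) ≤ (1 / (n * α)) * ∑ i, max (z i - r) 0 := by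
      have : (0:ℝ) ≤ ∑ i, max (z i - r) 0 :=
        Finset.sum_nonneg fun i _ => le_max_right _ _
      positivity
    calc min 0 ((1 / (n * α)) * ∑ i, z i) ≤ 0 := min_le_left _ _
      _ ≤ r := h
      _ ≤ _ := le_add_of_nonneg_right h2
  · have h1 : ∑ i, (z i - r) ≤ ∑ i, max (z i - r) 0 :=
      Finset.sum_le_sum fun i _ => le_max_left _ _
    have h2 : ∑ i, (z i - r) = (∑ i, z i) - n * r := by
      rw [Finset.sum_sub_distrib]
      simp [mul_comm]
    have hc : 0 < 1 / (n * α) := by positivity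
    have key : r + (1 / (n * α)) * ((∑ i, z i) - n * r)
        ≥ (1 / (n * α)) * ∑ i, z i := by
      have hcn : (1 / (n * α)) * n = 1 / α := by field_simp
      have h3 : r * (1 - 1/α) ≥ 0 := by
        have : 1/α > 1 := (one_lt_div hα0).mpr hα1
        nlinarith
      nlinarith [hcn]
    calc min 0 ((1 / (n * α)) * ∑ i, z i) ≤ (1 / (n * α)) * ∑ i, z i := min_le_right _ _
      _ ≤ r + (1 / (n * α)) * ((∑ i, z i) - n * r) := key
      _ ≤ r + (1 / (n * α)) * ∑ i, max (z i - r) 0 := by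
          have := mul_le_mul_of_nonneg_left (h2 ▸ h1) hc.le
          linarith

lemma ecvar_key (α : ℝ) (hα : α ∈ Set.Ioo (0 : ℝ) 1) (n : ℕ) (hn : 1 ≤ n)
    (x y : Fin n → ℝ) :
    ecvar n α x ≤ ecvar n α y + (1 / (n * α)) * ∑ i, max (x i - y i) 0 := by
  obtain ⟨hα0, hα1⟩ := hα
  have hn0 : (0:ℝ) < n := by exact_mod_cast hn
  have hc : 0 < 1 / (n * α) := by positivity
  rw [ecvar, ecvar]
  rw [← sub_le_iff_le_add]
  refine le_ciInf fun r => ?_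
  rw [sub_le_iff_le_add]
  refine (ciInf_le (ecvar_bdd α ⟨hα0, hα1⟩ n hn x) r).trans ?_
  have hsum : ∑ i, max (x i - r) 0 ≤ (∑ i, max (y i - r) 0) + ∑ i, max (x i - y i) 0 := by
    rw [← Finset.sum_add_distrib]
    refine Finset.sum_le_sum fun i _ => ?_
    rcases le_total (x i - r) 0 with h | h
    · have : (0:ℝ) ≤ max (y i - r) 0 + max (x i - y i) 0 :=
        add_nonneg (le_max_right _ _) (le_max_right _ _)
      simpa [max_eq_right h] using this
    · rw [max_eq_left h]
      have h1 : x i - r = (y i - r) + (x i - y i) := by ring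
      rw [h1]; exact add_le_add (le_max_left _ _) (le_max_left _ _)
  have := mul_le_mul_of_nonneg_left hsum hc.le
  linarith

theorem ecvar_sub_bounds (α : ℝ) (hα : α ∈ Set.Ioo (0 : ℝ) 1) (n : ℕ) (hn : 1 ≤ n)
    (x y : Fin n → ℝ) :
    -((1 / (n * α)) * ∑ i, max (y i - x i) 0) ≤ ecvar n α x - ecvar n α y ∧
      ecvar n α x - ecvar n α y ≤ (1 / (n * α)) * ∑ i, max (x i - y i) 0 := by
  have h1 := ecvar_key α hα n hn x y
  have h2 := ecvar_key α hα n hn y x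
  constructor <;> linarith
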